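/- There exist constants c > 0, C > 0 and an integer n₀ such that for all n ≥ n₀ the area (2-dimensional Lebesgue measure) of the region X₂ satisfies c·n ≤ Area(X₂) ≤ C·n; equivalently, 2·∫_{0.9·n^{4/7}}^{n^{4/7}−1} 0.5·(n^{4/7} − r)^{−1/4} · r dr = Θ(n). -/

import Mathlib

open MeasureTheory

/-- The region `X₂`, given in polar coordinates `(r, θ)`, `θ ∈ (-π, π]`, by
`0.9·n^{4/7} < r < n^{4/7} - 1` and `min(|θ|, |θ - π|) < 0.5·(n^{4/7} - r)^{-1/4}`,
with the plane modeled by `ℂ` (so `r = |z|` and `θ = arg z`). -/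
noncomputable def X2 (n : ℕ) : Set ℂ :=
  {z : ℂ |
    0.9 * (n : ℝ) ^ ((4 : ℝ) / 7) < ‖z‖ ∧
    ‖z‖ < (n : ℝ) ^ ((4 : ℝ) / 7) - 1 ∧
    min |z.arg| |z.arg - Real.pi| <
      0.5 * ((n : ℝ) ^ ((4 : ℝ) / 7) - ‖z‖) ^ ((-1 : ℝ) / 4)}

section Aux
open Set intervalIntegral


lemma Kval {R : ℝ} (hR : 1000 ≤ R) :
    ∫ r in (0.9*R)..(R-1), (R - r) ^ ((-1:ℝ)/4) = ((0.1*R)^((3:ℝ)/4) - 1) * (4/3) := by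
  rw [intervalIntegral.integral_comp_sub_left (fun x => x ^ ((-1:ℝ)/4)) R,
    show R - (R-1) = 1 by ring, show R - 0.9*R = 0.1*R by ring,
    integral_rpow (Or.inl (by norm_num)),
    show ((-1:ℝ)/4 + 1) = 3/4 by norm_num, Real.one_rpow]
  ring

lemma Sbounds {R : ℝ} (hR : 1000 ≤ R) :
    2 ≤ (0.1*R)^((3:ℝ)/4) ∧ 0.1 * R^((3:ℝ)/4) ≤ (0.1*R)^((3:ℝ)/4) ∧
      (0.1*R)^((3:ℝ)/4) ≤ R^((3:ℝ)/4) := by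
  have h16 : (16:ℝ)^((3:ℝ)/4) = 8 := by
    rw [show (16:ℝ) = 2^(4:ℕ) by norm_num, ← Real.rpow_natCast 2 4,
      ← Real.rpow_mul (by norm_num),
      show ((4:ℕ):ℝ)*((3:ℝ)/4) = ((3:ℕ):ℝ) by norm_num, Real.rpow_natCast]
    norm_num
  refine ⟨?_, ?_, ?_⟩
  · have : (16:ℝ)^((3:ℝ)/4) ≤ (0.1*R)^((3:ℝ)/4) :=
      Real.rpow_le_rpow (by norm_num) (by nlinarith) (by norm_num)
    linarith [h16]
  · rw [Real.mul_rpow (by norm_num) (by linarith)]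
    have h1 : (0.1:ℝ)^((1:ℝ)) ≤ (0.1:ℝ)^((3:ℝ)/4) :=
      Real.rpow_le_rpow_of_exponent_ge (by norm_num) (by norm_num) (by norm_num)
    rw [Real.rpow_one] at h1
    have h2 : (0:ℝ) ≤ R^((3:ℝ)/4) := Real.rpow_nonneg (by linarith) _
    nlinarith
  · exact Real.rpow_le_rpow (by nlinarith) (by nlinarith) (by norm_num)

lemma Jbounds {R : ℝ} (hR : 1000 ≤ R) :
    0.06 * R^((7:ℝ)/4) ≤ 2 * ∫ r in (0.9*R)..(R-1), 0.5 * (R - r) ^ ((-1:ℝ)/4) * r ∧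
      3 * ∫ r in (0.9*R)..(R-1), 0.5 * (R - r) ^ ((-1:ℝ)/4) * r ≤ 2 * R^((7:ℝ)/4) := by
  have hab : (0.9*R) ≤ R - 1 := by linarith
  have hcont : ContinuousOn (fun r => (R - r) ^ ((-1:ℝ)/4)) (Icc (0.9*R) (R-1)) := by
    have hc : Continuous fun r : ℝ => R - r := by fun_prop
    apply ContinuousOn.rpow_const hc.continuousOn
    intro x hx
    left
    simp only [mem_Icc] at hx
    nlinarith [hx.2]
  have hint : ∀ c : ℝ, IntervalIntegrable (fun r => 0.5 * (R - r) ^ ((-1:ℝ)/4) * c) volume (0.9*R) (R-1) := by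
    intro c
    rw [intervalIntegrable_iff_integrableOn_Icc_of_le hab]
    exact (((continuousOn_const.mul hcont).mul continuousOn_const)).integrableOn_Icc
  have hintid : IntervalIntegrable (fun r => 0.5 * (R - r) ^ ((-1:ℝ)/4) * r) volume (0.9*R) (R-1) := by
    rw [intervalIntegrable_iff_integrableOn_Icc_of_le hab]
    exact (((continuousOn_const.mul hcont).mul continuousOn_id)).integrableOn_Icc
  have hKc : ∀ c : ℝ, ∫ r in (0.9*R)..(R-1), 0.5 * (R - r) ^ ((-1:ℝ)/4) * c
      = 0.5 * c * (((0.1*R)^((3:ℝ)/4) - 1) * (4/3)) := by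
    intro c
    rw [show (fun r => 0.5 * (R - r) ^ ((-1:ℝ)/4) * c) = (fun r => (0.5*c) * ((R - r) ^ ((-1:ℝ)/4))) by
      funext r; ring]
    rw [intervalIntegral.integral_const_mul, Kval hR]
  have hnneg : ∀ x ∈ Icc (0.9*R) (R-1), (0:ℝ) ≤ (R - x) ^ ((-1:ℝ)/4) := by
    intro x hx
    simp only [mem_Icc] at hx
    exact Real.rpow_nonneg (by linarith) _
  have hlow : ∫ r in (0.9*R)..(R-1), 0.5 * (R - r) ^ ((-1:ℝ)/4) * (0.9*R)
      ≤ ∫ r in (0.9*R)..(R-1), 0.5 * (R - r) ^ ((-1:ℝ)/4) * r := by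
    apply intervalIntegral.integral_mono_on hab (hint _) hintid
    intro x hx
    have := hnneg x hx
    simp only [mem_Icc] at hx
    nlinarith [hx.1]
  have hhigh : ∫ r in (0.9*R)..(R-1), 0.5 * (R - r) ^ ((-1:ℝ)/4) * r
      ≤ ∫ r in (0.9*R)..(R-1), 0.5 * (R - r) ^ ((-1:ℝ)/4) * R := by
    apply intervalIntegral.integral_mono_on hab hintid (hint _)
    intro x hx
    have := hnneg x hx
    simp only [mem_Icc] at hx
    nlinarith [hx.2]
  rw [hKc] at hlow hhigh
  obtain ⟨hS2, hSl, hSu⟩ := Sbounds hR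
  have hR74 : R * R^((3:ℝ)/4) = R^((7:ℝ)/4) := by
    rw [← Real.rpow_one_add' (by linarith) (by norm_num)]
    norm_num
  constructor
  · nlinarith [hS2, hSl, Real.rpow_nonneg (show (0:ℝ) ≤ R by linarith) ((3:ℝ)/4)]
  · nlinarith [hS2, hSu, Real.rpow_nonneg (show (0:ℝ) ≤ R by linarith) ((3:ℝ)/4)]


/-- The polar-coordinates version of the region. -/
def Pset (R : ℝ) : Set (ℝ × ℝ) :=
  {p : ℝ × ℝ | 0.9 * R < p.1 ∧ p.1 < R - 1 ∧
    min |p.2| |p.2 - Real.pi| < 0.5 * (R - p.1) ^ ((-1 : ℝ) / 4)} ∩ polarCoord.target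

lemma measurable_Pset (R : ℝ) : MeasurableSet (Pset R) := by
  apply MeasurableSet.inter _ polarCoord.open_target.measurableSet
  apply MeasurableSet.inter (measurableSet_lt measurable_const measurable_fst)
  apply MeasurableSet.inter (measurableSet_lt measurable_fst measurable_const)
  exact measurableSet_lt
    ((measurable_snd.abs).min ((measurable_snd.sub measurable_const).abs))
    (by measurability : Measurable fun p : ℝ × ℝ => 0.5 * (R - p.1) ^ ((-1:ℝ)/4))

lemma measurable_X2 (n : ℕ) : MeasurableSet (X2 n) := by
  have habs : Measurable fun z : ℂ => ‖z‖ := continuous_norm.measurable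
  apply MeasurableSet.inter (measurableSet_lt measurable_const habs)
  apply MeasurableSet.inter (measurableSet_lt habs measurable_const)
  exact measurableSet_lt
    ((Complex.measurable_arg.abs).min ((Complex.measurable_arg.sub measurable_const).abs))
    (by
      have h0 : Measurable fun x : ℝ => (n : ℝ) ^ ((4 : ℝ) / 7) - x :=
        (continuous_const.sub continuous_id).measurable
      have : Measurable fun x : ℝ => 0.5 * ((n : ℝ) ^ ((4 : ℝ) / 7) - x) ^ ((-1:ℝ)/4) := by
        apply Measurable.const_mul
        apply Measurable.pow h0 measurable_const
      exact this.comp habs)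

lemma slice_measure {R r : ℝ} (hR : 1000 ≤ R) (hr : r ∈ Ioo (0.9 * R) (R - 1)) :
    volume {θ : ℝ | (r, θ) ∈ Pset R} =
      ENNReal.ofReal (3 * (0.5 * (R - r) ^ ((-1 : ℝ) / 4))) := by
  simp only [mem_Ioo] at hr
  set g : ℝ := 0.5 * (R - r) ^ ((-1 : ℝ) / 4) with hg
  have hg0 : 0 < g := by
    have : (0:ℝ) < (R - r) ^ ((-1 : ℝ) / 4) :=
      Real.rpow_pos_of_pos (by linarith [hr.2]) _
    linarith
  have hg1 : g < 0.5 := by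
    have : (R - r) ^ ((-1 : ℝ) / 4) < 1 :=
      Real.rpow_lt_one_of_one_lt_of_neg (by linarith [hr.2]) (by norm_num)
    rw [hg]; nlinarith
  have hpi : (3:ℝ) < Real.pi := Real.pi_gt_three
  have hset : {θ : ℝ | (r, θ) ∈ Pset R} = Ioo (-g) g ∪ Ioo (Real.pi - g) Real.pi := by
    ext θ
    simp only [Pset, mem_inter_iff, mem_setOf_eq, polarCoord_target, mem_prod, mem_Ioi,
      mem_Ioo, mem_union, min_lt_iff, abs_lt, ← hg]
    constructor
    · rintro ⟨⟨h1, h2, h3 | h4⟩, hr0, hθ1, hθ2⟩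
      · exact Or.inl ⟨h3.1, h3.2⟩
      · exact Or.inr ⟨by linarith [h4.1], hθ2⟩
    · rintro (⟨h1, h2⟩ | ⟨h1, h2⟩)
      · exact ⟨⟨hr.1, hr.2, Or.inl ⟨h1, h2⟩⟩, by linarith [hr.1], by linarith, by linarith⟩
      · exact ⟨⟨hr.1, hr.2, Or.inr ⟨by linarith, by linarith⟩⟩, by linarith [hr.1],
          by linarith, h2⟩
  rw [hset, measure_union ?_ measurableSet_Ioo, Real.volume_Ioo, Real.volume_Ioo,
    ← ENNReal.ofReal_add (by linarith) (by linarith)]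
  · congr 1; ring
  · rw [Set.disjoint_left]
    rintro θ ⟨_, h2⟩ ⟨h3, _⟩
    linarith

lemma comp_polar (p : ℝ × ℝ) :
    Complex.measurableEquivRealProd (Complex.polarCoord.symm p) = polarCoord.symm p := by
  simp only [Complex.polarCoord_symm_apply, Complex.measurableEquivRealProd_apply,
    polarCoord_symm_apply]
  refine Prod.ext ?_ ?_ <;>
    simp [Complex.mul_re, Complex.mul_im, Complex.cos_ofReal_re, Complex.sin_ofReal_re]

lemma volume_im_zero : volume {z : ℂ | z.im = 0} = 0 := by
  have h1 : {z : ℂ | z.im = 0} = Complex.measurableEquivRealProd ⁻¹' (univ ×ˢ {(0:ℝ)}) := by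
    ext z
    simp [Complex.measurableEquivRealProd_apply, eq_comm]
  rw [h1, Complex.volume_preserving_equiv_real_prod.measure_preimage
    ((MeasurableSet.univ.prod (measurableSet_singleton 0)).nullMeasurableSet)]
  rw [Measure.volume_eq_prod, Measure.prod_prod]
  simp

lemma X2_inter_slitPlane (n : ℕ) :
    X2 n ∩ Complex.slitPlane =
      Complex.polarCoord.symm '' Pset ((n : ℝ) ^ ((4 : ℝ) / 7)) := by
  set R : ℝ := (n : ℝ) ^ ((4 : ℝ) / 7) with hRdef
  ext z
  constructor
  · rintro ⟨hz, hs⟩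
    have hsrc : z ∈ Complex.polarCoord.source := by
      rw [Complex.polarCoord_source]; exact hs
    refine ⟨Complex.polarCoord z, ?_, Complex.polarCoord.left_inv hsrc⟩
    refine ⟨?_, Complex.polarCoord.map_source hsrc⟩
    rw [Complex.polarCoord_apply]
    exact hz
  · rintro ⟨p, ⟨hpQ, hpT⟩, rfl⟩
    have hzs : Complex.polarCoord.symm p ∈ Complex.polarCoord.source :=
      Complex.polarCoord.map_target hpT
    have hinv : Complex.polarCoord (Complex.polarCoord.symm p) = p :=
      Complex.polarCoord.right_inv hpT
    rw [Complex.polarCoord_apply] at hinv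
    have h1 : ‖Complex.polarCoord.symm p‖ = p.1 := congrArg Prod.fst hinv
    have h2 : (Complex.polarCoord.symm p).arg = p.2 := congrArg Prod.snd hinv
    refine ⟨?_, hzs⟩
    rw [X2, mem_setOf_eq, h1, h2]
    exact hpQ

lemma volume_X2_eq (n : ℕ) (hR : 1000 ≤ (n : ℝ) ^ ((4 : ℝ) / 7)) :
    volume (X2 n) = ENNReal.ofReal (3 *
      ∫ r in (0.9 * (n : ℝ) ^ ((4 : ℝ) / 7))..((n : ℝ) ^ ((4 : ℝ) / 7) - 1),
        0.5 * ((n : ℝ) ^ ((4 : ℝ) / 7) - r) ^ ((-1 : ℝ) / 4) * r) := by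
  set R : ℝ := (n : ℝ) ^ ((4 : ℝ) / 7) with hRdef
  have hab : 0.9 * R ≤ R - 1 := by linarith
  have hPm := measurable_Pset R
  -- step 1: reduce to the slit plane
  have hnull : volume Complex.slitPlaneᶜ = 0 := by
    apply measure_mono_null _ volume_im_zero
    intro z hz
    simp only [mem_compl_iff, Complex.mem_slitPlane_iff, not_or, not_lt, not_ne_iff] at hz
    exact hz.2
  rw [← measure_inter_conull hnull, X2_inter_slitPlane n]
  -- step 2: transfer to ℝ × ℝ
  have hmeasB : MeasurableSet (Complex.polarCoord.symm '' Pset R) := by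
    rw [← X2_inter_slitPlane n]
    exact (measurable_X2 n).inter Complex.isOpen_slitPlane.measurableSet
  have htrans : Complex.measurableEquivRealProd.symm ⁻¹' (Complex.polarCoord.symm '' Pset R)
      = polarCoord.symm '' Pset R := by
    ext q
    simp only [mem_preimage, mem_image]
    constructor
    · rintro ⟨p, hp, hq⟩
      refine ⟨p, hp, ?_⟩
      rw [← comp_polar p, hq, MeasurableEquiv.apply_symm_apply]
    · rintro ⟨p, hp, rfl⟩
      refine ⟨p, hp, ?_⟩
      rw [← comp_polar p, MeasurableEquiv.symm_apply_apply]
  rw [← (Complex.volume_preserving_equiv_real_prod.symm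
      Complex.measurableEquivRealProd).measure_preimage hmeasB.nullMeasurableSet, htrans]
  -- step 3: Jacobian change of variables
  set Bd : ℝ × ℝ → ℝ × ℝ →L[ℝ] ℝ × ℝ := fun p =>
    LinearMap.toContinuousLinearMap (Matrix.toLin (Module.Basis.finTwoProd ℝ) (Module.Basis.finTwoProd ℝ)
      !![Real.cos p.2, -p.1 * Real.sin p.2; Real.sin p.2, p.1 * Real.cos p.2]) with hBd
  have hder : ∀ p ∈ Pset R, HasFDerivWithinAt polarCoord.symm (Bd p) (Pset R) p :=
    fun p _ => (hasFDerivAt_polarCoord_symm p).hasFDerivWithinAt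
  have hBdet : ∀ p : ℝ × ℝ, (Bd p).det = p.1 := by
    intro p
    conv_rhs => rw [← one_mul p.1, ← Real.cos_sq_add_sin_sq p.2]
    simp only [hBd, neg_mul, LinearMap.det_toContinuousLinearMap, LinearMap.det_toLin,
      Matrix.det_fin_two_of, sub_neg_eq_add]
    ring
  have hinj : InjOn polarCoord.symm (Pset R) := by
    apply polarCoord.symm.injOn.mono
    rw [OpenPartialHomeomorph.symm_source]
    exact inter_subset_right
  rw [← lintegral_abs_det_fderiv_eq_addHaar_image volume hPm hder hinj]
  have hptpos : ∀ p ∈ Pset R, ENNReal.ofReal |(Bd p).det| = ENNReal.ofReal p.1 := by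
    intro p hp
    rw [hBdet]
    rcases hp with ⟨-, hpT⟩
    rw [polarCoord_target] at hpT
    rw [abs_of_pos hpT.1]
  rw [setLIntegral_congr_fun hPm hptpos]
  -- step 4: Fubini
  rw [← lintegral_indicator hPm, Measure.volume_eq_prod,
    lintegral_prod _ ((measurable_fst.ennreal_ofReal).indicator hPm).aemeasurable]
  have hslice : ∀ r : ℝ,
      (∫⁻ θ, (Pset R).indicator (fun p => ENNReal.ofReal p.1) (r, θ)) =
        (Ioo (0.9 * R) (R - 1)).indicator
          (fun r => ENNReal.ofReal (3 * (0.5 * (R - r) ^ ((-1 : ℝ) / 4)) * r)) r := by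
    intro r
    have hms : MeasurableSet {θ : ℝ | (r, θ) ∈ Pset R} := measurable_prodMk_left hPm
    have h1 : (fun θ : ℝ => (Pset R).indicator (fun p => ENNReal.ofReal p.1) (r, θ)) =
        {θ : ℝ | (r, θ) ∈ Pset R}.indicator (fun _ => ENNReal.ofReal r) := by
      funext θ
      by_cases h : (r, θ) ∈ Pset R <;> simp [indicator, h]
    rw [h1, lintegral_indicator hms, setLIntegral_const]
    by_cases hr : r ∈ Ioo (0.9 * R) (R - 1)
    · rw [slice_measure hR hr, indicator_of_mem hr]
      rw [← ENNReal.ofReal_mul (le_of_lt (by have := hr.1; simp only [mem_Ioo] at hr; linarith))]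
      congr 1
      ring
    · have hempty : {θ : ℝ | (r, θ) ∈ Pset R} = ∅ := by
        ext θ
        simp only [mem_setOf_eq, mem_empty_iff_false, iff_false]
        rintro ⟨⟨h1', h2', -⟩, -⟩
        exact hr ⟨h1', h2'⟩
      rw [hempty, indicator_of_notMem hr]
      simp
  simp_rw [hslice]
  rw [lintegral_indicator measurableSet_Ioo]
  -- step 5: back to a Bochner interval integral
  have hcont : ContinuousOn (fun r => 3 * (0.5 * (R - r) ^ ((-1 : ℝ) / 4)) * r)
      (Icc (0.9 * R) (R - 1)) := by
    have hc : Continuous fun r : ℝ => R - r := by fun_prop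
    have h2 : ContinuousOn (fun r : ℝ => (R - r) ^ ((-1 : ℝ) / 4)) (Icc (0.9 * R) (R - 1)) := by
      apply ContinuousOn.rpow_const hc.continuousOn
      intro x hx
      left
      simp only [mem_Icc] at hx
      nlinarith [hx.2]
    exact ((continuousOn_const.mul (continuousOn_const.mul h2)).mul continuousOn_id)
  have hInt : IntegrableOn (fun r => 3 * (0.5 * (R - r) ^ ((-1 : ℝ) / 4)) * r)
      (Ioo (0.9 * R) (R - 1)) volume :=
    (hcont.integrableOn_Icc).mono_set Ioo_subset_Icc_self
  have hnn : 0 ≤ᵐ[volume.restrict (Ioo (0.9 * R) (R - 1))]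
      fun r => 3 * (0.5 * (R - r) ^ ((-1 : ℝ) / 4)) * r := by
    refine (ae_restrict_iff' measurableSet_Ioo).2 (ae_of_all _ fun r hr => ?_)
    simp only [mem_Ioo] at hr
    have h1 : (0:ℝ) ≤ (R - r) ^ ((-1 : ℝ) / 4) := Real.rpow_nonneg (by linarith) _
    show (0:ℝ) ≤ 3 * (0.5 * (R - r) ^ ((-1 : ℝ) / 4)) * r
    nlinarith [hr.1]
  rw [← ofReal_integral_eq_lintegral_ofReal hInt hnn]
  congr 1
  rw [← integral_Ioc_eq_integral_Ioo, ← intervalIntegral.integral_of_le hab]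
  rw [← intervalIntegral.integral_const_mul]
  apply intervalIntegral.integral_congr
  intro x hx
  ring

end Aux

open intervalIntegral in
/-- The area of `X₂` is `Θ(n)`; equivalently,
`2·∫_{0.9·n^{4/7}}^{n^{4/7} - 1} 0.5·(n^{4/7} - r)^{-1/4}·r dr = Θ(n)`. -/
theorem area_X2_theta_n :
    ∃ c C : ℝ, 0 < c ∧ 0 < C ∧ ∃ n₀ : ℕ, ∀ n : ℕ, n₀ ≤ n →
      (ENNReal.ofReal (c * (n : ℝ)) ≤ volume (X2 n) ∧
        volume (X2 n) ≤ ENNReal.ofReal (C * (n : ℝ))) ∧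
      (c * (n : ℝ) ≤
          2 * ∫ r in (0.9 * (n : ℝ) ^ ((4 : ℝ) / 7))..((n : ℝ) ^ ((4 : ℝ) / 7) - 1),
            0.5 * ((n : ℝ) ^ ((4 : ℝ) / 7) - r) ^ ((-1 : ℝ) / 4) * r ∧
        2 * ∫ r in (0.9 * (n : ℝ) ^ ((4 : ℝ) / 7))..((n : ℝ) ^ ((4 : ℝ) / 7) - 1),
            0.5 * ((n : ℝ) ^ ((4 : ℝ) / 7) - r) ^ ((-1 : ℝ) / 4) * r ≤
          C * (n : ℝ)) := by
  refine ⟨0.06, 2, by norm_num, by norm_num, 10 ^ 7, fun n hn => ?_⟩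
  set R : ℝ := (n : ℝ) ^ ((4 : ℝ) / 7) with hRdef
  have hR : 1000 ≤ R := by
    have h0 : ((10 ^ 7 : ℕ) : ℝ) ≤ (n : ℝ) := Nat.cast_le.mpr hn
    have h1 : ((10 : ℝ) ^ (7 : ℕ)) ≤ (n : ℝ) := by push_cast at h0; norm_num at h0 ⊢; linarith
    have h2 : ((10 : ℝ) ^ (7 : ℕ)) ^ ((4 : ℝ) / 7) ≤ R :=
      Real.rpow_le_rpow (by positivity) h1 (by norm_num)
    have h3 : ((10 : ℝ) ^ (7 : ℕ)) ^ ((4 : ℝ) / 7) = (10 : ℝ) ^ (4 : ℕ) := by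
      rw [← Real.rpow_natCast (10 : ℝ) 7, ← Real.rpow_mul (by norm_num),
        show ((7 : ℕ) : ℝ) * ((4 : ℝ) / 7) = ((4 : ℕ) : ℝ) by norm_num, Real.rpow_natCast]
    rw [h3] at h2
    norm_num at h2
    linarith
  have hR74 : R ^ ((7 : ℝ) / 4) = (n : ℝ) := by
    rw [hRdef, ← Real.rpow_mul (Nat.cast_nonneg n)]
    norm_num
  obtain ⟨hJl, hJu⟩ := Jbounds hR
  set J := ∫ r in (0.9 * R)..(R - 1), 0.5 * (R - r) ^ ((-1 : ℝ) / 4) * r with hJdef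
  have hvol := volume_X2_eq n hR
  have hRpos : (0 : ℝ) ≤ R ^ ((7 : ℝ) / 4) := Real.rpow_nonneg (by linarith) _
  have hJnn : 0 ≤ J := by nlinarith
  rw [hR74] at hJl hJu
  refine ⟨⟨?_, ?_⟩, ?_, ?_⟩
  · rw [hvol]
    exact ENNReal.ofReal_le_ofReal (by linarith)
  · rw [hvol]
    exact ENNReal.ofReal_le_ofReal (by linarith)
  · linarith
  · linarith
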